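/- Let μ ∈ ℝ^d, let Σ be a d×d positive semidefinite matrix, let ε ∈ (0,1), and let A be a finite nonempty set of points in ℝ^d satisfying conditions (L.1)–(L.2) with respect to (μ, Σ, ε). Let A' ⊆ A with |A'| ≥ (1−ε)|A|, let P and L be symmetric d×d matrices, and let r ≥ 0. If ‖Cov_{x∼A'}[P x] − L‖_F ≤ r, then ‖P Σ P − L‖_F ≤ 2·(r + ‖L‖_op). -/

import Mathlib

open Matrix MeasureTheory ProbabilityTheory

noncomputable section

namespace ListDecCov

/-- Frobenius norm of a square real matrix. -/
def frobNorm {d : ℕ} (M : Matrix (Fin d) (Fin d) ℝ) : ℝ :=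
  Real.sqrt (∑ i, ∑ j, (M i j) ^ 2)

/-- Operator (spectral) norm of a square real matrix. -/
def opNorm {d : ℕ} (M : Matrix (Fin d) (Fin d) ℝ) : ℝ :=
  ‖Matrix.toEuclideanCLM (𝕜 := ℝ) M‖

/-- Euclidean (ℓ²) norm of a vector. -/
def vecNorm {d : ℕ} (v : Fin d → ℝ) : ℝ :=
  Real.sqrt (∑ i, (v i) ^ 2)

/-- The four Penrose equations characterizing the Moore–Penrose pseudoinverse. -/
def IsMoorePenrose {d : ℕ} (H Hd : Matrix (Fin d) (Fin d) ℝ) : Prop :=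
  H * Hd * H = H ∧ Hd * H * Hd = Hd ∧ (H * Hd)ᵀ = H * Hd ∧ (Hd * H)ᵀ = Hd * H

/-- Average of `f` over a finite set. -/
def fAvg {X V : Type*} [AddCommMonoid V] [Module ℝ V] (A : Finset X) (f : X → V) : V :=
  (A.card : ℝ)⁻¹ • ∑ x ∈ A, f x

/-- Average of `f` over a multiset. -/
def msAvg {X V : Type*} [AddCommMonoid V] [Module ℝ V] (T : Multiset X) (f : X → V) : V :=
  (T.card : ℝ)⁻¹ • (T.map f).sum

/-- Empirical covariance matrix of `f x`, `x` ranging over a finite set. -/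
def fCov {X : Type*} {d : ℕ} (A : Finset X) (f : X → (Fin d → ℝ)) :
    Matrix (Fin d) (Fin d) ℝ :=
  fAvg A (fun x => Matrix.vecMulVec (f x) (f x)) - Matrix.vecMulVec (fAvg A f) (fAvg A f)

/-- Empirical covariance matrix of `f x`, `x` ranging over a multiset. -/
def msCov {X : Type*} {d : ℕ} (T : Multiset X) (f : X → (Fin d → ℝ)) :
    Matrix (Fin d) (Fin d) ℝ :=
  msAvg T (fun x => Matrix.vecMulVec (f x) (f x)) - Matrix.vecMulVec (msAvg T f) (msAvg T f)

/-- Empirical variance of `g x`, `x` ranging over a finite set. -/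
def fVar {X : Type*} (A : Finset X) (g : X → ℝ) : ℝ :=
  fAvg A fun x => (g x - fAvg A g) ^ 2

/-- Empirical variance of `g x`, `x` ranging over a multiset. -/
def msVar {X : Type*} (T : Multiset X) (g : X → ℝ) : ℝ :=
  msAvg T fun x => (g x - msAvg T g) ^ 2

/-- The `k`-th smallest element (1-indexed) of a multiset of reals. -/
def kthSmallest (s : Multiset ℝ) (k : ℕ) : ℝ :=
  (s.sort (· ≤ ·)).getD (k - 1) 0

/-- Median (the `⌈m/2⌉`-th smallest element) of a multiset of reals of size `m`. -/
def msMedian (s : Multiset ℝ) : ℝ :=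
  kthSmallest s ((Multiset.card s + 1) / 2)

/-- The positive semidefinite square root of a psd matrix, as `Matrix.PosSemidef.sqrt` was
defined in the older Mathlib. -/
def psdSqrt {d : ℕ} {A : Matrix (Fin d) (Fin d) ℝ} (hA : A.PosSemidef) :
    Matrix (Fin d) (Fin d) ℝ :=
  hA.1.eigenvectorUnitary.1 * diagonal ((↑) ∘ (√·) ∘ hA.1.eigenvalues) *
  (star hA.1.eigenvectorUnitary : Matrix (Fin d) (Fin d) ℝ)

/-- Conditions (L.1)–(L.2) of stability, with respect to mean `μ`, covariance `Sig`
(with psd square root `sqrtSig`) and parameter `ε`. -/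
def SatisfiesL12 {d : ℕ} (μ : Fin d → ℝ) (Sig sqrtSig : Matrix (Fin d) (Fin d) ℝ) (ε : ℝ)
    (A : Finset (Fin d → ℝ)) : Prop :=
  ∀ A' ⊆ A, (1 - ε) * (A.card : ℝ) ≤ (A'.card : ℝ) →
    (∀ v : Fin d → ℝ,
        |fAvg A' (fun x => v ⬝ᵥ (x - μ))| ≤ 0.1 * Real.sqrt (v ⬝ᵥ Sig.mulVec v)) ∧
    (∀ U : Matrix (Fin d) (Fin d) ℝ, U.IsSymm →
        |Matrix.trace ((fAvg A' (fun x => Matrix.vecMulVec (x - μ) (x - μ)) - Sig) * U)|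
          ≤ 0.1 * frobNorm (sqrtSig * U * sqrtSig))

end ListDecCov

namespace ListDecCov

open scoped Matrix.Norms.L2Operator

variable {X : Type*}


variable {d : ℕ}

lemma vecNorm_nonneg (v : Fin d → ℝ) : 0 ≤ vecNorm v := Real.sqrt_nonneg _

lemma frobNorm_nonneg (M : Matrix (Fin d) (Fin d) ℝ) : 0 ≤ frobNorm M := Real.sqrt_nonneg _

lemma vecNorm_sq (v : Fin d → ℝ) : vecNorm v ^ 2 = ∑ i, v i ^ 2 :=
  Real.sq_sqrt (Finset.sum_nonneg fun _ _ => sq_nonneg _)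

lemma frobNorm_sq (M : Matrix (Fin d) (Fin d) ℝ) : frobNorm M ^ 2 = ∑ i, ∑ j, M i j ^ 2 :=
  Real.sq_sqrt (Finset.sum_nonneg fun _ _ => Finset.sum_nonneg fun _ _ => sq_nonneg _)

lemma dotProduct_self_eq (v : Fin d → ℝ) : v ⬝ᵥ v = vecNorm v ^ 2 := by
  rw [vecNorm_sq]; simp [dotProduct, sq]

lemma dotProduct_le (a b : Fin d → ℝ) : a ⬝ᵥ b ≤ vecNorm a * vecNorm b := by
  have h := Finset.sum_mul_sq_le_sq_mul_sq Finset.univ a b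
  have h2 : (a ⬝ᵥ b) ^ 2 ≤ (vecNorm a * vecNorm b) ^ 2 := by
    rw [mul_pow, vecNorm_sq, vecNorm_sq]; exact h
  have h3 := Real.sqrt_le_sqrt h2
  rw [Real.sqrt_sq_eq_abs, Real.sqrt_sq (mul_nonneg (vecNorm_nonneg a) (vecNorm_nonneg b))] at h3
  exact (le_abs_self _).trans h3

lemma opNorm_eq_norm (M : Matrix (Fin d) (Fin d) ℝ) : opNorm M = ‖M‖ := rfl

lemma opNorm_nonneg (M : Matrix (Fin d) (Fin d) ℝ) : 0 ≤ opNorm M := norm_nonneg _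

lemma vecNorm_eq_norm (v : Fin d → ℝ) :
    vecNorm v = ‖(EuclideanSpace.equiv (Fin d) ℝ).symm v‖ := by
  rw [EuclideanSpace.norm_eq]; simp [vecNorm, sq_abs]

lemma vecNorm_mulVec_le (M : Matrix (Fin d) (Fin d) ℝ) (v : Fin d → ℝ) :
    vecNorm (M *ᵥ v) ≤ opNorm M * vecNorm v := by
  rw [opNorm_eq_norm, vecNorm_eq_norm, vecNorm_eq_norm]
  exact Matrix.l2_opNorm_mulVec M ((EuclideanSpace.equiv (Fin d) ℝ).symm v)

lemma opNorm_le_of (M : Matrix (Fin d) (Fin d) ℝ) (c : ℝ) (hc : 0 ≤ c)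
    (h : ∀ v : Fin d → ℝ, vecNorm (M *ᵥ v) ≤ c * vecNorm v) : opNorm M ≤ c := by
  rw [opNorm_eq_norm, show ‖M‖ = ‖Matrix.toEuclideanCLM (𝕜 := ℝ) M‖ from rfl]
  apply ContinuousLinearMap.opNorm_le_bound _ hc
  intro x
  have h2 : Matrix.toEuclideanCLM (𝕜 := ℝ) M x
      = (EuclideanSpace.equiv (Fin d) ℝ).symm (M *ᵥ (WithLp.equiv 2 _ x)) := rfl
  rw [h2, ← vecNorm_eq_norm]
  calc vecNorm (M *ᵥ (WithLp.equiv 2 _ x)) ≤ c * vecNorm (WithLp.equiv 2 _ x) := h _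
    _ = c * ‖x‖ := by rw [vecNorm_eq_norm]; rfl

lemma conjTranspose_real (M : Matrix (Fin d) (Fin d) ℝ) : Mᴴ = Mᵀ := by
  ext i j; simp

lemma opNorm_transpose (M : Matrix (Fin d) (Fin d) ℝ) : opNorm Mᵀ = opNorm M := by
  rw [opNorm_eq_norm, opNorm_eq_norm, ← conjTranspose_real, Matrix.l2_opNorm_conjTranspose]

lemma opNorm_mul_self (A : Matrix (Fin d) (Fin d) ℝ) : opNorm (Aᵀ * A) = opNorm A * opNorm A := by
  rw [opNorm_eq_norm, opNorm_eq_norm, ← conjTranspose_real, Matrix.l2_opNorm_conjTranspose_mul_self]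

lemma frobNorm_transpose (M : Matrix (Fin d) (Fin d) ℝ) : frobNorm Mᵀ = frobNorm M := by
  unfold frobNorm; rw [Finset.sum_comm]; simp [transpose_apply]

lemma frobNorm_neg (M : Matrix (Fin d) (Fin d) ℝ) : frobNorm (-M) = frobNorm M := by
  unfold frobNorm; simp

lemma frobNorm_mul_le_left (A B : Matrix (Fin d) (Fin d) ℝ) :
    frobNorm (A * B) ≤ opNorm A * frobNorm B := by
  have key : ∑ i, ∑ j, ((A * B) i j) ^ 2 ≤ (opNorm A * frobNorm B) ^ 2 := by
    rw [Finset.sum_comm]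
    have hj : ∀ j : Fin d, ∑ i, ((A * B) i j) ^ 2 ≤ opNorm A ^ 2 * ∑ k, (B k j) ^ 2 := by
      intro j
      have h1 : ∑ i, ((A * B) i j) ^ 2 = vecNorm (A *ᵥ fun k => B k j) ^ 2 := by
        rw [vecNorm_sq]
        exact Finset.sum_congr rfl fun i _ => by
          simp [Matrix.mul_apply, Matrix.mulVec, dotProduct]
      have h3 : vecNorm (A *ᵥ fun k => B k j) ^ 2 ≤ (opNorm A * vecNorm fun k => B k j) ^ 2 :=
        pow_le_pow_left₀ (vecNorm_nonneg _) (vecNorm_mulVec_le A _) 2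
      rw [h1]
      calc _ ≤ (opNorm A * vecNorm fun k => B k j) ^ 2 := h3
        _ = opNorm A ^ 2 * ∑ k, (B k j) ^ 2 := by rw [mul_pow, vecNorm_sq]
    calc ∑ j, ∑ i, ((A * B) i j) ^ 2 ≤ ∑ j, opNorm A ^ 2 * ∑ k, (B k j) ^ 2 :=
          Finset.sum_le_sum fun j _ => hj j
      _ = opNorm A ^ 2 * ∑ j, ∑ k, (B k j) ^ 2 := by rw [Finset.mul_sum]
      _ = (opNorm A * frobNorm B) ^ 2 := by
          rw [mul_pow, frobNorm_sq, Finset.sum_comm]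
  have := Real.sqrt_le_sqrt key
  rwa [Real.sqrt_sq (mul_nonneg (opNorm_nonneg A) (frobNorm_nonneg B))] at this

lemma frobNorm_mul_le_right (A B : Matrix (Fin d) (Fin d) ℝ) :
    frobNorm (A * B) ≤ frobNorm A * opNorm B := by
  calc frobNorm (A * B) = frobNorm ((A * B)ᵀ) := (frobNorm_transpose _).symm
    _ = frobNorm (Bᵀ * Aᵀ) := by rw [Matrix.transpose_mul]
    _ ≤ opNorm Bᵀ * frobNorm Aᵀ := frobNorm_mul_le_left _ _
    _ = frobNorm A * opNorm B := by rw [opNorm_transpose, frobNorm_transpose]; ring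

lemma frobNorm_eq_norm (M : Matrix (Fin d) (Fin d) ℝ) :
    frobNorm M = ‖(EuclideanSpace.equiv (Fin d × Fin d) ℝ).symm (fun p => M p.1 p.2)‖ := by
  rw [EuclideanSpace.norm_eq, Fintype.sum_prod_type]
  unfold frobNorm
  simp [sq_abs]

lemma frobNorm_add_le (X Y : Matrix (Fin d) (Fin d) ℝ) :
    frobNorm (X + Y) ≤ frobNorm X + frobNorm Y := by
  rw [frobNorm_eq_norm, frobNorm_eq_norm, frobNorm_eq_norm]
  have : ((fun p => (X + Y) p.1 p.2) : Fin d × Fin d → ℝ)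
      = (fun p => X p.1 p.2) + (fun p => Y p.1 p.2) := by ext p; simp
  rw [this, map_add]
  exact norm_add_le _ _

lemma trace_mul_self_symm (M : Matrix (Fin d) (Fin d) ℝ) (h : M.IsSymm) :
    Matrix.trace (M * M) = frobNorm M ^ 2 := by
  rw [frobNorm_sq]
  unfold Matrix.trace
  simp only [Matrix.diag, Matrix.mul_apply]
  exact Finset.sum_congr rfl fun i _ => Finset.sum_congr rfl fun j _ => by
    rw [h.apply i j, sq]

lemma frobNorm_vecMulVec (w : Fin d → ℝ) : frobNorm (vecMulVec w w) = vecNorm w ^ 2 := by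
  unfold frobNorm
  rw [vecNorm_sq]
  have : ∑ i, ∑ j, (vecMulVec w w i j) ^ 2 = (∑ i, w i ^ 2) * (∑ j, w j ^ 2) := by
    rw [Finset.sum_mul_sum]
    exact Finset.sum_congr rfl fun i _ => Finset.sum_congr rfl fun j _ => by
      simp [vecMulVec_apply]; ring
  rw [this, ← sq, Real.sqrt_sq (Finset.sum_nonneg fun _ _ => sq_nonneg _)]

lemma vecMulVec_mulVec (P Q : Matrix (Fin d) (Fin d) ℝ) (a b : Fin d → ℝ) :
    vecMulVec (P *ᵥ a) (Q *ᵥ b) = P * vecMulVec a b * Qᵀ := by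
  ext i j
  simp only [Matrix.mul_apply, vecMulVec_apply, Matrix.mulVec, dotProduct, transpose_apply,
    Finset.sum_mul, Finset.mul_sum]
  exact Finset.sum_congr rfl fun k _ => Finset.sum_congr rfl fun l _ => by ring



lemma fAvg_add {V : Type*} [AddCommGroup V] [Module ℝ V] (A : Finset X) (f g : X → V) :
    fAvg A (fun x => f x + g x) = fAvg A f + fAvg A g := by
  unfold fAvg; rw [Finset.sum_add_distrib, smul_add]

lemma fAvg_sub {V : Type*} [AddCommGroup V] [Module ℝ V] (A : Finset X) (f g : X → V) :
    fAvg A (fun x => f x - g x) = fAvg A f - fAvg A g := by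
  unfold fAvg; rw [Finset.sum_sub_distrib, smul_sub]

lemma fAvg_const {V : Type*} [AddCommGroup V] [Module ℝ V] (A : Finset X)
    (h : (A.card : ℝ) ≠ 0) (c : V) : fAvg A (fun _ => c) = c := by
  unfold fAvg
  rw [Finset.sum_const, ← Nat.cast_smul_eq_nsmul ℝ, smul_smul, inv_mul_cancel₀ h, one_smul]

lemma fAvg_conj (A : Finset X) (f : X → Matrix (Fin d) (Fin d) ℝ)
    (P Q : Matrix (Fin d) (Fin d) ℝ) :
    fAvg A (fun x => P * f x * Q) = P * fAvg A f * Q := by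
  simp only [fAvg, Matrix.mul_smul, Matrix.smul_mul, Finset.mul_sum, Finset.sum_mul]

lemma fAvg_mulVec (A : Finset X) (f : X → (Fin d → ℝ)) (P : Matrix (Fin d) (Fin d) ℝ) :
    fAvg A (fun x => P *ᵥ f x) = P *ᵥ fAvg A f := by
  simp only [fAvg, ← Matrix.mulVecLin_apply, _root_.map_smul, map_sum]

lemma fAvg_dot (A : Finset X) (f : X → (Fin d → ℝ)) (v : Fin d → ℝ) :
    fAvg A (fun x => v ⬝ᵥ f x) = v ⬝ᵥ fAvg A f := by
  simp only [fAvg, dotProduct, Finset.sum_apply, Pi.smul_apply, smul_eq_mul,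
    Finset.mul_sum, Finset.sum_mul]
  rw [Finset.sum_comm]
  exact Finset.sum_congr rfl fun i _ => Finset.sum_congr rfl fun x _ => by ring

lemma fAvg_vecMulVec_right (A : Finset X) (f : X → (Fin d → ℝ)) (b : Fin d → ℝ) :
    fAvg A (fun x => vecMulVec (f x) b) = vecMulVec (fAvg A f) b := by
  ext i j
  simp only [fAvg, vecMulVec_apply, Matrix.smul_apply, Matrix.sum_apply, Pi.smul_apply,
    smul_eq_mul, Finset.sum_apply, Finset.sum_mul, Finset.mul_sum]
  exact Finset.sum_congr rfl fun x _ => by ring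

lemma fAvg_vecMulVec_left (A : Finset X) (f : X → (Fin d → ℝ)) (a : Fin d → ℝ) :
    fAvg A (fun x => vecMulVec a (f x)) = vecMulVec a (fAvg A f) := by
  ext i j
  simp only [fAvg, vecMulVec_apply, Matrix.smul_apply, Matrix.sum_apply, Pi.smul_apply,
    smul_eq_mul, Finset.sum_apply, Finset.sum_mul, Finset.mul_sum]
  exact Finset.sum_congr rfl fun x _ => by ring


lemma mulVec_dotProduct_eq (A : Matrix (Fin d) (Fin d) ℝ) (a b : Fin d → ℝ) :
    (A *ᵥ a) ⬝ᵥ b = a ⬝ᵥ (Aᵀ *ᵥ b) := by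
  simp only [dotProduct, Matrix.mulVec, dotProduct, transpose_apply,
    Finset.sum_mul, Finset.mul_sum]
  rw [Finset.sum_comm]
  exact Finset.sum_congr rfl fun k _ => Finset.sum_congr rfl fun l _ => by ring

lemma opNorm_le_frobNorm (M : Matrix (Fin d) (Fin d) ℝ) : opNorm M ≤ frobNorm M := by
  apply opNorm_le_of M _ (frobNorm_nonneg M)
  intro v
  have key : ∑ i, ((M *ᵥ v) i) ^ 2 ≤ (frobNorm M * vecNorm v) ^ 2 := by
    rw [mul_pow, frobNorm_sq, vecNorm_sq, Finset.sum_mul]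
    apply Finset.sum_le_sum; intro i _
    have := Finset.sum_mul_sq_le_sq_mul_sq Finset.univ (fun j => M i j) v
    simpa [Matrix.mulVec, dotProduct] using this
  have h2 := Real.sqrt_le_sqrt key
  rwa [Real.sqrt_sq (mul_nonneg (frobNorm_nonneg M) (vecNorm_nonneg v))] at h2


/-- if the empirical covariance of `P x` over a large subset `A'` of a stable
set `A` is `r`-close to `L` in Frobenius norm, then `‖P Σ P − L‖_F ≤ 2(r + ‖L‖_op)`. -/
theorem statement3 (d : ℕ) (μ : Fin d → ℝ)
    (Sig : Matrix (Fin d) (Fin d) ℝ) (hSig : Sig.PosSemidef)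
    (ε : ℝ) (hε : ε ∈ Set.Ioo (0 : ℝ) 1)
    (A : Finset (Fin d → ℝ)) (hA : A.Nonempty)
    (hstab : SatisfiesL12 μ Sig (psdSqrt hSig) ε A)
    (A' : Finset (Fin d → ℝ)) (hsub : A' ⊆ A)
    (hcard : (1 - ε) * (A.card : ℝ) ≤ (A'.card : ℝ))
    (P L : Matrix (Fin d) (Fin d) ℝ) (hP : P.IsSymm) (hL : L.IsSymm)
    (r : ℝ) (hr : 0 ≤ r)
    (hclose : frobNorm (fCov A' (fun x => P.mulVec x) - L) ≤ r) :
    frobNorm (P * Sig * P - L) ≤ 2 * (r + opNorm L) := by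
  obtain ⟨hε0, hε1⟩ := hε
  have hAc : (0:ℝ) < A.card := by exact_mod_cast Finset.card_pos.mpr hA
  have hA'c : (0:ℝ) < A'.card := lt_of_lt_of_le (mul_pos (by linarith) hAc) hcard
  have hA'ne : (A'.card : ℝ) ≠ 0 := ne_of_gt hA'c
  obtain ⟨h1, h2⟩ := hstab A' hsub hcard
  set S := psdSqrt hSig with hSdef
  have hSsymm : Sᵀ = S := by
    have h : Sᴴ = S := by
      rw [hSdef]; unfold psdSqrt
      rw [Matrix.conjTranspose_mul, Matrix.conjTranspose_mul, Matrix.star_eq_conjTranspose,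
        Matrix.conjTranspose_conjTranspose, Matrix.diagonal_conjTranspose, Matrix.mul_assoc]
      congr 3
    rwa [conjTranspose_real] at h
  have hSS : S * S = Sig := by
    rw [hSdef]; unfold psdSqrt
    have hU : (star hSig.1.eigenvectorUnitary : Matrix (Fin d) (Fin d) ℝ) * hSig.1.eigenvectorUnitary.1 = 1 :=
      Unitary.star_mul_self_of_mem hSig.1.eigenvectorUnitary.2
    conv_rhs => rw [hSig.1.spectral_theorem, Unitary.conjStarAlgAut_apply]
    rw [show ∀ a b c e f g : Matrix (Fin d) (Fin d) ℝ, a * b * c * (e * f * g) = a * (b * (c * e) * f) * g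
      from fun a b c e f g => by simp only [Matrix.mul_assoc], hU, Matrix.mul_one, Matrix.diagonal_mul_diagonal]
    congr 3
    funext i
    simp [Real.mul_self_sqrt (hSig.eigenvalues_nonneg i)]
  have hSigSymm : Sigᵀ = Sig := by
    have h : Sigᴴ = Sig := hSig.isHermitian
    rwa [conjTranspose_real] at h
  clear_value S
  set m0 := fAvg A' (fun x => x) with hm0
  set E1 := fAvg A' (fun x => x - μ) with hE1def
  set E2 := fAvg A' (fun x => vecMulVec (x - μ) (x - μ)) with hE2def
  set w := P *ᵥ E1 with hwdef
  set G := P * Sig * P with hGdef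
  set s2 := opNorm G with hs2def
  have hs2 : 0 ≤ s2 := by rw [hs2def]; exact opNorm_nonneg _
  clear_value m0 E1 E2 w G s2
  have hE1eq : E1 = m0 - μ := by
    rw [hE1def, fAvg_sub A' (fun x => x) (fun _ => μ), fAvg_const A' hA'ne, ← hm0]
  have hconj : ∀ X : Matrix (Fin d) (Fin d) ℝ, Xᵀ = X → (P * X * P)ᵀ = P * X * P := by
    intro X hX
    rw [Matrix.transpose_mul, Matrix.transpose_mul, hX, hP.eq, Matrix.mul_assoc]
  have hE2symm : E2ᵀ = E2 := by
    ext i j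
    simp only [hE2def, fAvg, transpose_apply, Matrix.smul_apply, Matrix.sum_apply,
      vecMulVec_apply, smul_eq_mul]
    congr 1
    exact Finset.sum_congr rfl fun x _ => by ring
  -- Key covariance identity
  have hvmv : ∀ a : Fin d → ℝ, vecMulVec (P *ᵥ a) (P *ᵥ a) = P * vecMulVec a a * P := by
    intro a; rw [vecMulVec_mulVec, hP.eq]
  have hQ : fAvg A' (fun x => vecMulVec (P *ᵥ x) (P *ᵥ x))
      = P * (fAvg A' fun x => vecMulVec x x) * P := by
    simp_rw [hvmv]
    exact fAvg_conj A' _ P P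
  have hmean : fAvg A' (fun x => P *ᵥ x) = P *ᵥ m0 := by
    rw [hm0]; exact fAvg_mulVec A' (fun x => x) P
  have hE2exp : E2 = (fAvg A' fun x => vecMulVec x x)
      - vecMulVec m0 μ - vecMulVec μ m0 + vecMulVec μ μ := by
    have e1 : (fun x : Fin d → ℝ => vecMulVec (x - μ) (x - μ))
        = fun x => (vecMulVec x x - vecMulVec x μ) - (vecMulVec μ x - vecMulVec μ μ) := by
      funext x; ext i j
      simp only [vecMulVec_apply, Matrix.sub_apply, Pi.sub_apply, Matrix.add_apply]
      ring
    rw [hE2def, e1, fAvg_sub, fAvg_sub, fAvg_sub,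
      fAvg_vecMulVec_right A' (fun x => x) μ, fAvg_vecMulVec_left A' (fun x => x) μ,
      fAvg_const A' hA'ne, ← hm0]
    abel
  have hE1vmv : vecMulVec E1 E1 = vecMulVec m0 m0
      - vecMulVec m0 μ - vecMulVec μ m0 + vecMulVec μ μ := by
    rw [hE1eq]; ext i j
    simp only [vecMulVec_apply, Matrix.sub_apply, Pi.sub_apply, Matrix.add_apply]
    ring
  have hcenter : E2 - vecMulVec E1 E1
      = (fAvg A' fun x => vecMulVec x x) - vecMulVec m0 m0 := by
    rw [hE2exp, hE1vmv]; abel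
  have hww : vecMulVec w w = P * vecMulVec E1 E1 * P := by
    rw [hwdef, hvmv]
  have hcov : fCov A' (fun x => P.mulVec x) = P * E2 * P - vecMulVec w w := by
    unfold fCov
    rw [hQ, hmean, hvmv m0, hww, ← Matrix.sub_mul, ← Matrix.mul_sub, ← hcenter]
    noncomm_ring
  -- operator norms of S * P and P * S
  have hSPsq : opNorm (S * P) * opNorm (S * P) = s2 := by
    have h := opNorm_mul_self (S * P)
    have heq : (S * P)ᵀ * (S * P) = G := by
      rw [Matrix.transpose_mul, hSsymm, hP.eq, hGdef, ← hSS]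
      simp only [Matrix.mul_assoc]
    rw [heq] at h
    rw [hs2def, h]
  have hPS : opNorm (P * S) = opNorm (S * P) := by
    rw [← opNorm_transpose (P * S), Matrix.transpose_mul, hSsymm, hP.eq]
  -- Bound B1
  set M0 := P * E2 * P - G with hM0def
  have hM0D : M0 = P * (E2 - Sig) * P := by
    rw [hM0def, hGdef, Matrix.mul_sub, Matrix.sub_mul]
  have hM0symm : M0ᵀ = M0 := by
    rw [hM0D]
    exact hconj _ (by rw [Matrix.transpose_sub, hE2symm, hSigSymm])
  have hUsymm : (P * M0 * P)ᵀ = P * M0 * P := hconj M0 hM0symm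
  have htr := h2 (P * M0 * P) hUsymm
  have hL2lhs : Matrix.trace ((E2 - Sig) * (P * M0 * P)) = frobNorm M0 ^ 2 := by
    have e1 : (E2 - Sig) * (P * M0 * P) = ((E2 - Sig) * (P * M0)) * P := by
      simp only [Matrix.mul_assoc]
    have e2 : P * ((E2 - Sig) * (P * M0)) = M0 * M0 := by
      rw [hM0D]; simp only [Matrix.mul_assoc]
    rw [e1, Matrix.trace_mul_comm, e2]
    exact trace_mul_self_symm M0 hM0symm
  have hfr : frobNorm (S * (P * M0 * P) * S) ≤ s2 * frobNorm M0 := by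
    have e3 : S * (P * M0 * P) * S = (S * P) * (M0 * (P * S)) := by
      simp only [Matrix.mul_assoc]
    calc frobNorm (S * (P * M0 * P) * S) = frobNorm ((S * P) * (M0 * (P * S))) := by rw [e3]
      _ ≤ opNorm (S * P) * frobNorm (M0 * (P * S)) := frobNorm_mul_le_left _ _
      _ ≤ opNorm (S * P) * (frobNorm M0 * opNorm (P * S)) := by
          apply mul_le_mul_of_nonneg_left (frobNorm_mul_le_right _ _) (opNorm_nonneg _)
      _ = s2 * frobNorm M0 := by rw [hPS, ← hSPsq]; ring
  have hB1 : frobNorm M0 ≤ 0.1 * s2 := by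
    have habs : frobNorm M0 ^ 2 ≤ 0.1 * (s2 * frobNorm M0) := by
      calc frobNorm M0 ^ 2 = Matrix.trace ((E2 - Sig) * (P * M0 * P)) := hL2lhs.symm
        _ ≤ |Matrix.trace ((E2 - Sig) * (P * M0 * P))| := le_abs_self _
        _ ≤ 0.1 * frobNorm (S * (P * M0 * P) * S) := htr
        _ ≤ 0.1 * (s2 * frobNorm M0) := by linarith [hfr]
    rcases eq_or_lt_of_le (frobNorm_nonneg M0) with h0 | h0
    · rw [← h0]; exact mul_nonneg (by norm_num) hs2
    · nlinarith [habs, h0]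
  -- Bound B2
  have hwb : vecNorm w ≤ 0.1 * Real.sqrt s2 := by
    have hv := h1 (P *ᵥ w)
    have hl : fAvg A' (fun x => (P *ᵥ w) ⬝ᵥ (x - μ)) = vecNorm w ^ 2 := by
      rw [fAvg_dot A' (fun x => x - μ) (P *ᵥ w), ← hE1def,
        mulVec_dotProduct_eq, hP.eq, ← hwdef, dotProduct_self_eq]
    have hrb : (P *ᵥ w) ⬝ᵥ Sig *ᵥ (P *ᵥ w) ≤ s2 * vecNorm w ^ 2 := by
      have e4 : (P *ᵥ w) ⬝ᵥ Sig *ᵥ (P *ᵥ w) = w ⬝ᵥ (G *ᵥ w) := by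
        rw [mulVec_dotProduct_eq, hP.eq, hGdef]
        rw [Matrix.mulVec_mulVec, Matrix.mulVec_mulVec]
      rw [e4]
      calc w ⬝ᵥ (G *ᵥ w) ≤ vecNorm w * vecNorm (G *ᵥ w) := dotProduct_le _ _
        _ ≤ vecNorm w * (opNorm G * vecNorm w) := by
            apply mul_le_mul_of_nonneg_left (vecNorm_mulVec_le _ _) (vecNorm_nonneg _)
        _ = s2 * vecNorm w ^ 2 := by rw [← hs2def]; ring
    have hsq : Real.sqrt ((P *ᵥ w) ⬝ᵥ Sig *ᵥ (P *ᵥ w)) ≤ Real.sqrt s2 * vecNorm w := by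
      have := Real.sqrt_le_sqrt hrb
      rwa [Real.sqrt_mul hs2, Real.sqrt_sq (vecNorm_nonneg w)] at this
    have hfin : vecNorm w ^ 2 ≤ 0.1 * (Real.sqrt s2 * vecNorm w) := by
      calc vecNorm w ^ 2 = fAvg A' (fun x => (P *ᵥ w) ⬝ᵥ (x - μ)) := hl.symm
        _ ≤ |fAvg A' (fun x => (P *ᵥ w) ⬝ᵥ (x - μ))| := le_abs_self _
        _ ≤ 0.1 * Real.sqrt ((P *ᵥ w) ⬝ᵥ Sig *ᵥ (P *ᵥ w)) := hv
        _ ≤ 0.1 * (Real.sqrt s2 * vecNorm w) := by linarith [hsq]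
    rcases eq_or_lt_of_le (vecNorm_nonneg w) with h0 | h0
    · rw [← h0]; exact mul_nonneg (by norm_num) (Real.sqrt_nonneg _)
    · nlinarith [hfin, h0]
  have hB2 : frobNorm (vecMulVec w w) ≤ 0.01 * s2 := by
    rw [frobNorm_vecMulVec]
    have h5 : vecNorm w ^ 2 ≤ (0.1 * Real.sqrt s2) ^ 2 :=
      pow_le_pow_left₀ (vecNorm_nonneg w) hwb 2
    calc vecNorm w ^ 2 ≤ (0.1 * Real.sqrt s2) ^ 2 := h5
      _ = 0.01 * s2 := by rw [mul_pow, Real.sq_sqrt hs2]; norm_num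
  -- Assemble
  have hdecomp : G - L = (G - P * E2 * P) + vecMulVec w w
      + (fCov A' (fun x => P.mulVec x) - L) := by
    rw [hcov]; abel
  have ht : frobNorm (G - L) ≤ 0.1 * s2 + 0.01 * s2 + r := by
    rw [hdecomp]
    have t1 : frobNorm ((G - P * E2 * P) + vecMulVec w w
          + (fCov A' (fun x => P.mulVec x) - L))
        ≤ frobNorm ((G - P * E2 * P) + vecMulVec w w)
          + frobNorm (fCov A' (fun x => P.mulVec x) - L) := frobNorm_add_le _ _
    have t2 : frobNorm ((G - P * E2 * P) + vecMulVec w w)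
        ≤ frobNorm (G - P * E2 * P) + frobNorm (vecMulVec w w) := frobNorm_add_le _ _
    have t3 : frobNorm (G - P * E2 * P) = frobNorm M0 := by
      rw [show G - P * E2 * P = -M0 by rw [hM0def]; abel, frobNorm_neg]
    linarith [hB1, hB2, hclose, t1, t2, t3]
  have hs2le : s2 ≤ frobNorm (G - L) + opNorm L := by
    have n1 : opNorm G ≤ opNorm (G - L) + opNorm L := by
      rw [opNorm_eq_norm, opNorm_eq_norm, opNorm_eq_norm]
      calc ‖G‖ = ‖(G - L) + L‖ := by rw [sub_add_cancel]
        _ ≤ ‖G - L‖ + ‖L‖ := norm_add_le _ _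
    have n2 : opNorm (G - L) ≤ frobNorm (G - L) := opNorm_le_frobNorm _
    rw [hs2def]; linarith
  have hLop : 0 ≤ opNorm L := opNorm_nonneg _
  linarith [frobNorm_nonneg (G - L), ht, hs2le, hr, hLop]

end ListDecCov
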